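/- Let d ≥ 1 and m ≤ n be positive integers, let v ∈ ℤ^d have every entry coprime to m, let δ ∈ ℤ^d, and let l = (l₁,…,l_d) with each l_k ∈ {0, 1/n, 2/n, …, (n−m)/n} (so that n·l ∈ ℤ^d). Then R(n,m,v,δ) ∩ Π_{k=1}^d [l_k, l_k + m/n] = { (m/n)·x + l : x ∈ L(m, v, δ − n·l) }. -/

import Mathlib

open Finset

/-- Distance from a real number to the nearest integer: w(t) = min over z in ZZ of |t - z|. -/
noncomputable def nid (t : ℝ) : ℝ := ⨅ z : ℤ, |t - (z : ℝ)|

/-- Wrap-around distance on ℝ^d. -/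
noncomputable def wdist {d : ℕ} (u : Fin d → ℝ) : ℝ := Real.sqrt (∑ k, nid (u k) ^ 2)

/-- Lattice-based Latin hypercube design
L(n,v,δ) = { z + i·v/n + δ/n + 1_d/(2n) : z ∈ ℤ^d, i ∈ ℤ } ∩ [0,1]^d. -/
def LHDset (d n : ℕ) (v : Fin d → ℤ) (δ : Fin d → ℝ) : Set (Fin d → ℝ) :=
  {x | (∃ (z : Fin d → ℤ) (i : ℤ),
          x = fun k => (z k : ℝ) + (i : ℝ) * (v k : ℝ) / n + δ k / n + 1 / (2 * n)) ∧
       ∀ k, x k ∈ Set.Icc (0 : ℝ) 1}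

/-- Regularly repeated lattice-based Latin hypercube design
R(n,m,v,δ) = { (m/n)·z + i·v/n + δ/n + 1_d/(2n) : z ∈ ℤ^d, i ∈ ℤ } ∩ [0,1]^d. -/
def RLHDset (d n m : ℕ) (v δ : Fin d → ℤ) : Set (Fin d → ℝ) :=
  {x | (∃ (z : Fin d → ℤ) (i : ℤ),
          x = fun k => (m : ℝ) * (z k : ℝ) / n + (i : ℝ) * (v k : ℝ) / n + (δ k : ℝ) / n + 1 / (2 * n)) ∧
       ∀ k, x k ∈ Set.Icc (0 : ℝ) 1}

/-- the portion of R(n,m,v,δ) inside the box Π_k [l_k, l_k + m/n] is the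
rescaled translated design (m/n)·L(m,v,δ−n·l) + l. -/
theorem stmt_16 (d n m : ℕ) (hd : 1 ≤ d) (hm : 1 ≤ m) (hmn : m ≤ n) (v δ : Fin d → ℤ)
    (hco : ∀ k, IsCoprime (v k) (m : ℤ))
    (l : Fin d → ℝ) (hl : ∀ k, ∃ a : ℕ, a ≤ n - m ∧ l k = (a : ℝ) / n) :
    RLHDset d n m v δ ∩ {x : Fin d → ℝ | ∀ k, x k ∈ Set.Icc (l k) (l k + (m : ℝ) / n)}
      = {y : Fin d → ℝ | ∃ x ∈ LHDset d m v (fun k => (δ k : ℝ) - (n : ℝ) * l k),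
          y = fun k => ((m : ℝ) / n) * x k + l k} := by
  have hm0 : (0:ℝ) < m := by exact_mod_cast hm
  have hn0 : (0:ℝ) < n := by exact_mod_cast lt_of_lt_of_le hm hmn
  have hl0 : ∀ k, 0 ≤ l k ∧ l k + (m:ℝ)/n ≤ 1 := by
    intro k
    obtain ⟨a, ha, hak⟩ := hl k
    have hcast : (a:ℝ) ≤ (n:ℝ) - m := by
      have h : ((a:ℕ):ℝ) ≤ (((n-m):ℕ):ℝ) := by exact_mod_cast ha
      rwa [Nat.cast_sub hmn] at h
    constructor
    · rw [hak]; positivity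
    · rw [hak, ← add_div, div_le_one hn0]; linarith
  ext y
  simp only [Set.mem_inter_iff, Set.mem_setOf_eq, RLHDset, LHDset]
  constructor
  · rintro ⟨⟨⟨z, i, hy⟩, hy01⟩, hbox⟩
    refine ⟨fun k => (n/m) * (y k - l k), ⟨⟨z, i, ?_⟩, ?_⟩, ?_⟩
    · funext k
      rw [hy]
      field_simp
      ring
    · intro k
      have hb1 := (hbox k).1
      have hb2 := (hbox k).2
      constructor
      · have : 0 ≤ y k - l k := by linarith
        positivity
      · have h1 : (n:ℝ)/m * ((m:ℝ)/n) = 1 := by field_simp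
        calc (n:ℝ)/m * (y k - l k) ≤ (n:ℝ)/m * ((m:ℝ)/n) := by
              apply mul_le_mul_of_nonneg_left (by linarith) (by positivity)
          _ = 1 := h1
    · funext k
      have : (m:ℝ)/n * ((n:ℝ)/m * (y k - l k)) = y k - l k := by
        field_simp
      rw [this]; ring
  · rintro ⟨x, ⟨⟨z, i, hx⟩, hx01⟩, hyx⟩
    have hbox : ∀ k, y k ∈ Set.Icc (l k) (l k + (m:ℝ)/n) := by
      intro k
      have h1 := (hx01 k).1
      have h2 := (hx01 k).2
      have hyk : y k = (m:ℝ)/n * x k + l k := by rw [hyx]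
      constructor
      · rw [hyk]; nlinarith [div_pos hm0 hn0]
      · rw [hyk]; nlinarith [div_pos hm0 hn0]
    refine ⟨⟨⟨z, i, ?_⟩, ?_⟩, hbox⟩
    · funext k
      rw [hyx, hx]
      field_simp
      ring
    · intro k
      have h := hbox k
      have h0 := hl0 k
      exact ⟨by linarith [h.1, h0.1], by linarith [h.2, h0.2]⟩
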